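/- Let w_1,…,w_K be reals with |w_i| ≤ 1, W̄ = (1/K)∑ w_i, S² = (1/K)∑ w_i² > 0, and let λ satisfy ∑ w_i/(1+λw_i)=0 with 1+λw_i > 0 for all i. Then |λ| ≤ |W̄| / (S² − |W̄|) whenever S² > |W̄|. -/

import Mathlib

/-- Owen's bound on the empirical likelihood Lagrange multiplier in the
bounded case `|w i| ≤ 1`: if `∑ w i/(1 + λ w i) = 0` with `1 + λ w i > 0`
for all `i`, and `S² = (1/K) ∑ w i² > |W̄| = |(1/K) ∑ w i|`, then
`|λ| ≤ |W̄|/(S² − |W̄|)`. -/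
theorem stmt12 (K : ℕ) (hK : 0 < K) (w : Fin K → ℝ)
    (hw : ∀ i, |w i| ≤ 1)
    (Wbar S2 : ℝ)
    (hWbar : Wbar = (1 / (K : ℝ)) * ∑ i, w i)
    (hS2 : S2 = (1 / (K : ℝ)) * ∑ i, (w i) ^ 2)
    (hS2pos : 0 < S2)
    (lam : ℝ) (hlam : ∀ i, 0 < 1 + lam * w i)
    (hzero : ∑ i, w i / (1 + lam * w i) = 0)
    (hgap : |Wbar| < S2) :
    |lam| ≤ |Wbar| / (S2 - |Wbar|) := by
  have hKpos : (0:ℝ) < (K:ℝ) := by exact_mod_cast hK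
  set T : ℝ := ∑ i, (w i)^2 / (1 + lam * w i) with hT
  -- key identity: lam * T = ∑ w i
  have hid : lam * T = ∑ i, w i := by
    have : ∑ i, w i - lam * T = 0 := by
      rw [hT, Finset.mul_sum, ← Finset.sum_sub_distrib, ← hzero]
      apply Finset.sum_congr rfl
      intro i _
      have h := (hlam i).ne'
      rw [eq_div_iff h, sub_mul, mul_assoc lam, div_mul_cancel₀ _ h]
      ring
    linarith
  -- bound T from below
  have hTbound : (K:ℝ) * S2 / (1 + |lam|) ≤ T := by
    have hden : (0:ℝ) < 1 + |lam| := by positivity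
    have h1 : (K:ℝ) * S2 = ∑ i, (w i)^2 := by
      rw [hS2]; field_simp
    rw [h1, Finset.sum_div]
    apply Finset.sum_le_sum
    intro i _
    apply div_le_div_of_nonneg_left (by positivity) (hlam i)
    have : lam * w i ≤ |lam| := by
      calc lam * w i ≤ |lam * w i| := le_abs_self _
        _ = |lam| * |w i| := abs_mul _ _
        _ ≤ |lam| * 1 := by nlinarith [abs_nonneg lam, hw i]
        _ = |lam| := mul_one _
    linarith
  have hTnonneg : 0 ≤ T := by
    have : 0 ≤ (K:ℝ) * S2 / (1 + |lam|) := by positivity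
    linarith
  -- |lam| * T = K * |Wbar|
  have habs : |lam| * T = (K:ℝ) * |Wbar| := by
    have h2 : |∑ i, w i| = (K:ℝ) * |Wbar| := by
      rw [hWbar, abs_mul, abs_of_pos (by positivity : (0:ℝ) < 1/(K:ℝ))]
      field_simp
    calc |lam| * T = |lam * T| := by rw [abs_mul, abs_of_nonneg hTnonneg]
      _ = |∑ i, w i| := by rw [hid]
      _ = (K:ℝ) * |Wbar| := h2
  -- combine
  have hden : (0:ℝ) < 1 + |lam| := by positivity
  have hkey : |lam| * ((K:ℝ) * S2 / (1 + |lam|)) ≤ (K:ℝ) * |Wbar| := by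
    rw [← habs]
    exact mul_le_mul_of_nonneg_left hTbound (abs_nonneg lam)
  have hkey2 : |lam| * S2 ≤ (1 + |lam|) * |Wbar| := by
    rw [show |lam| * ((K:ℝ) * S2 / (1 + |lam|)) = |lam| * ((K:ℝ) * S2) / (1 + |lam|) by ring,
      div_le_iff₀ hden] at hkey
    nlinarith
  have hfin : |lam| * (S2 - |Wbar|) ≤ |Wbar| := by nlinarith
  rw [le_div_iff₀ (by linarith)]
  linarith
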